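/- Let $G$ be a finite simple graph of order $n \geq 2$. Then $q(G) \leq \frac{2e(G)}{n-1} + n - 2$, where $q(G)$ is the signless Laplacian spectral radius of $G$ and $e(G)$ is the number of edges of $G$. -/

import Mathlib

open SimpleGraph Finset

/-- The number of edges of a simple graph. -/
noncomputable def eCard {V : Type*} (G : SimpleGraph V) : ℕ := Nat.card G.edgeSet

/-- The number of connected components of `G - S`, the subgraph of `G` induced on the
complement of `S`. -/
noncomputable def numCompDel {V : Type*} (G : SimpleGraph V) (S : Set V) : ℕ :=
  Nat.card (G.induce Sᶜ).ConnectedComponent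

/-- `G` has the `k`-strong parity property: for every vertex subset `X` of even size, `G`
contains a spanning subgraph `F` whose degrees are odd on `X` and even and at least `k`
outside `X`. -/
def KStrongParity {V : Type*} [Fintype V] (k : ℕ) (G : SimpleGraph V) : Prop :=
  ∀ X : Finset V, Even X.card → ∃ F : SimpleGraph V, F ≤ G ∧
    (∀ u ∈ X, Odd (Nat.card (F.neighborSet u))) ∧
    (∀ v, v ∉ X → Even (Nat.card (F.neighborSet v)) ∧ k ≤ Nat.card (F.neighborSet v))

/-- The join `K_s ∨ (K_{n 0} ∪ K_{n 1} ∪ ⋯ ∪ K_{n (t-1)})` of a complete graph `K_s` with a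
disjoint union of complete graphs of sizes `n 0, …, n (t-1)`. -/
def GJoin (s : ℕ) {t : ℕ} (n : Fin t → ℕ) :
    SimpleGraph (Fin s ⊕ Σ i : Fin t, Fin (n i)) where
  Adj u v := u ≠ v ∧ (u.isLeft ∨ v.isLeft ∨
    ∃ i : Fin t, (∃ a, u = Sum.inr ⟨i, a⟩) ∧ (∃ b, v = Sum.inr ⟨i, b⟩))
  symm := by
    constructor
    rintro u v ⟨h1, h2⟩
    refine ⟨h1.symm, ?_⟩
    rcases h2 with h | h | ⟨i, ha, hb⟩
    · exact Or.inr (Or.inl h)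
    · exact Or.inl h
    · exact Or.inr (Or.inr ⟨i, hb, ha⟩)
  loopless := by constructor; rintro u ⟨h, -⟩; exact h rfl

/-- The graph `K_s ∨ (K_a ∪ m K_p)`. -/
def KJmix (s a m p : ℕ) :
    SimpleGraph (Fin s ⊕ Σ i : Fin (m + 1), Fin ((Fin.cons a (fun _ => p) : Fin (m+1) → ℕ) i)) :=
  GJoin s (Fin.cons a (fun _ => p) : Fin (m+1) → ℕ)

/-- The signless Laplacian spectral radius of `G`: the largest eigenvalue of
`Q(G) = D(G) + A(G)`. -/
noncomputable def qSpec {V : Type*} [Fintype V] [DecidableEq V] (G : SimpleGraph V)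
    [DecidableRel G.Adj] : ℝ :=
  sSup {x : ℝ | Module.End.HasEigenvalue
    (Matrix.toLin' (Matrix.diagonal (fun v => (G.degree v : ℝ)) + G.adjMatrix ℝ)) x}

lemma das_arith (n t r S D b e : ℝ) (hn : n = r + t + 1) (ht : 1 ≤ t) (hr : 0 ≤ r)
    (hr1 : r = 0 ∨ 1 ≤ r) (hb0 : 0 ≤ b) (hD0 : 0 ≤ D)
    (he : 2 * e = t + S + D) (hS : S ≤ t * t + b) (hbD : b ≤ D) (hbtr : b ≤ t * r) :
    (n - 1) * (t ^ 2 + S) ≤ (2 * e + (n - 2) * (n - 1)) * t := by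
  subst hn
  have ht0 : (0:ℝ) < t := lt_of_lt_of_le one_pos ht
  rw [he]
  rcases hr1 with h | h
  · subst h
    nlinarith [mul_le_mul_of_nonneg_left hS ht0.le, mul_nonneg ht0.le hD0]
  · rcases le_total r t with hrt | hrt
    · nlinarith [mul_le_mul_of_nonneg_left hS hr, mul_nonneg (sub_nonneg.mpr hrt) hb0,
        mul_le_mul_of_nonneg_left hbD ht0.le,
        mul_nonneg (mul_nonneg ht0.le hr) (sub_nonneg.mpr h)]
    · nlinarith [mul_le_mul_of_nonneg_left hS hr,
        mul_le_mul_of_nonneg_left hbtr (sub_nonneg.mpr hrt),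
        mul_le_mul_of_nonneg_left hbD ht0.le,
        mul_nonneg (mul_nonneg ht0.le hr) (sub_nonneg.mpr ht)]

lemma cw_bound {V : Type*} [Fintype V] (M : Matrix V V ℝ)
    (h0 : ∀ i j, 0 ≤ M i j) (z : V → ℝ) (hz : ∀ i, 0 < z i) {B : ℝ}
    (hMz : ∀ i, M.mulVec z i ≤ B * z i) {μ : ℝ} {x : V → ℝ}
    (hx : x ≠ 0) (hMx : M.mulVec x = μ • x) : μ ≤ B := by
  obtain ⟨i0, hi0⟩ := Function.ne_iff.mp hx
  obtain ⟨v, -, hv⟩ := Finset.exists_max_image Finset.univ (fun w => |x w| / z w)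
    ⟨i0, Finset.mem_univ i0⟩
  have hrpos : 0 < |x v| / z v :=
    lt_of_lt_of_le (div_pos (abs_pos.mpr hi0) (hz i0)) (hv i0 (Finset.mem_univ i0))
  have hxv : 0 < |x v| := by
    by_contra h
    push_neg at h
    have : |x v| = 0 := le_antisymm h (abs_nonneg _)
    rw [this] at hrpos
    simp at hrpos
  have hxw : ∀ w, |x w| ≤ (|x v| / z v) * z w := by
    intro w
    have h1 := hv w (Finset.mem_univ w)
    calc |x w| = (|x w| / z w) * z w := (div_mul_cancel₀ _ (hz w).ne').symm
    _ ≤ (|x v| / z v) * z w := mul_le_mul_of_nonneg_right h1 (hz w).le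
  have e1 : M.mulVec x v = μ * x v := by rw [hMx]; rfl
  have key : |μ| * |x v| ≤ B * |x v| := by
    calc |μ| * |x v| = |μ * x v| := (abs_mul μ (x v)).symm
    _ = |M.mulVec x v| := by rw [e1]
    _ = |∑ j, M v j * x j| := by rw [Matrix.mulVec, dotProduct]
    _ ≤ ∑ j, |M v j * x j| := Finset.abs_sum_le_sum_abs _ _
    _ = ∑ j, M v j * |x j| := by
        refine Finset.sum_congr rfl fun j _ => ?_
        rw [abs_mul, abs_of_nonneg (h0 v j)]
    _ ≤ ∑ j, M v j * ((|x v| / z v) * z j) :=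
        Finset.sum_le_sum fun j _ => mul_le_mul_of_nonneg_left (hxw j) (h0 v j)
    _ = (|x v| / z v) * ∑ j, M v j * z j := by rw [Finset.mul_sum]; exact Finset.sum_congr rfl fun j _ => by ring
    _ = (|x v| / z v) * M.mulVec z v := by rw [Matrix.mulVec, dotProduct]
    _ ≤ (|x v| / z v) * (B * z v) := mul_le_mul_of_nonneg_left (hMz v) hrpos.le
    _ = B * ((|x v| / z v) * z v) := by ring
    _ = B * |x v| := by rw [div_mul_cancel₀ _ (hz v).ne']
  have : |μ| ≤ B := le_of_mul_le_mul_right key hxv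
  exact le_trans (le_abs_self μ) this

lemma das_key {V : Type*} [Fintype V] [DecidableEq V] (G : SimpleGraph V) [DecidableRel G.Adj]
    (n : ℕ) (hn : Fintype.card V = n) (v : V) (hd : 1 ≤ G.degree v) :
    ((n:ℝ) - 1) * ((G.degree v : ℝ) ^ 2 + ((∑ w ∈ G.neighborFinset v, G.degree w : ℕ) : ℝ))
      ≤ (2 * (G.edgeFinset.card : ℝ) + ((n:ℝ) - 2) * ((n:ℝ) - 1)) * (G.degree v : ℝ) := by
  classical
  set N := G.neighborFinset v with hNdef
  set R := Finset.univ \ insert v N with hRdef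
  have htN : N.card = G.degree v := rfl
  have hvN : v ∉ N := by simp [hNdef]
  have hsub : insert v N ⊆ Finset.univ := Finset.subset_univ _
  -- f1 : cards
  have f1 : R.card + (G.degree v + 1) = n := by
    have h := Finset.card_sdiff_add_card_eq_card hsub
    rw [Finset.card_insert_of_notMem hvN, htN, Finset.card_univ, hn] at h
    exact h
  -- f2 : degree sum split
  have f2 : 2 * G.edgeFinset.card
      = G.degree v + (∑ w ∈ N, G.degree w) + ∑ w ∈ R, G.degree w := by
    rw [← G.sum_degrees_eq_twice_card_edges, ← Finset.sum_sdiff hsub,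
      Finset.sum_insert hvN, ← hRdef]
    omega
  -- helper: intersection card as indicator sum
  have hcard : ∀ (w : V) (s : Finset V), (G.neighborFinset w ∩ s).card
      = ∑ u ∈ s, if u ∈ G.neighborFinset w then 1 else 0 := by
    intro w s
    rw [Finset.inter_comm, ← Finset.filter_mem_eq_inter, Finset.card_filter]
  -- f3 : S ≤ t² + b
  have f3 : (∑ w ∈ N, G.degree w)
      ≤ G.degree v * G.degree v + ∑ w ∈ N, (G.neighborFinset w ∩ R).card := by
    have step : ∀ w ∈ N, G.degree w ≤ G.degree v + (G.neighborFinset w ∩ R).card := by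
      intro w hwN
      have hsub2 : G.neighborFinset w ⊆ insert v (N.erase w) ∪ (G.neighborFinset w ∩ R) := by
        intro u hu
        by_cases hu' : u ∈ R
        · exact Finset.mem_union_right _ (Finset.mem_inter.mpr ⟨hu, hu'⟩)
        · have huin : u ∈ insert v N := by
            rw [hRdef] at hu'
            simp only [Finset.mem_sdiff, Finset.mem_univ, true_and, not_not] at hu'
            exact hu'
          apply Finset.mem_union_left
          rcases Finset.mem_insert.mp huin with h | h
          · exact h ▸ Finset.mem_insert_self _ _
          · have hne : u ≠ w := by
              rintro rfl
              simp at hu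
            exact Finset.mem_insert_of_mem (Finset.mem_erase.mpr ⟨hne, h⟩)
      calc G.degree w = (G.neighborFinset w).card := rfl
        _ ≤ (insert v (N.erase w) ∪ (G.neighborFinset w ∩ R)).card := Finset.card_le_card hsub2
        _ ≤ (insert v (N.erase w)).card + (G.neighborFinset w ∩ R).card := Finset.card_union_le _ _
        _ ≤ ((N.erase w).card + 1) + (G.neighborFinset w ∩ R).card := by
            exact Nat.add_le_add_right (Finset.card_insert_le _ _) _
        _ = G.degree v + (G.neighborFinset w ∩ R).card := by
            rw [Finset.card_erase_add_one hwN, htN]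
    calc (∑ w ∈ N, G.degree w)
        ≤ ∑ w ∈ N, (G.degree v + (G.neighborFinset w ∩ R).card) := Finset.sum_le_sum step
      _ = G.degree v * G.degree v + ∑ w ∈ N, (G.neighborFinset w ∩ R).card := by
          rw [Finset.sum_add_distrib, Finset.sum_const, smul_eq_mul, htN]
  -- f4 : double counting swap
  have f4 : (∑ w ∈ N, (G.neighborFinset w ∩ R).card)
      = ∑ u ∈ R, (G.neighborFinset u ∩ N).card := by
    simp only [hcard]
    rw [Finset.sum_comm]
    refine Finset.sum_congr rfl fun u _ => Finset.sum_congr rfl fun w _ => ?_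
    simp only [SimpleGraph.mem_neighborFinset]
    exact if_congr (G.adj_comm w u) rfl rfl
  -- f5 : b ≤ D
  have f5 : (∑ u ∈ R, (G.neighborFinset u ∩ N).card) ≤ ∑ u ∈ R, G.degree u :=
    Finset.sum_le_sum fun u _ => Finset.card_le_card (Finset.inter_subset_left)
  -- f6 : b ≤ t * r
  have f6 : (∑ w ∈ N, (G.neighborFinset w ∩ R).card) ≤ G.degree v * R.card := by
    calc (∑ w ∈ N, (G.neighborFinset w ∩ R).card)
        ≤ ∑ _w ∈ N, R.card :=
          Finset.sum_le_sum fun w _ => Finset.card_le_card (Finset.inter_subset_right)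
      _ = G.degree v * R.card := by rw [Finset.sum_const, smul_eq_mul, htN]
  -- assemble over ℝ
  refine das_arith (n:ℝ) (G.degree v : ℝ) (R.card : ℝ)
    ((∑ w ∈ N, G.degree w : ℕ) : ℝ) ((∑ u ∈ R, G.degree u : ℕ) : ℝ)
    ((∑ w ∈ N, (G.neighborFinset w ∩ R).card : ℕ) : ℝ) (G.edgeFinset.card : ℝ)
    ?_ ?_ ?_ ?_ ?_ ?_ ?_ ?_ ?_ ?_
  · exact_mod_cast (by omega : n = R.card + G.degree v + 1)
  · exact_mod_cast hd
  · exact Nat.cast_nonneg _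
  · rcases Nat.eq_zero_or_pos R.card with h | h
    · left; exact_mod_cast h
    · right; exact_mod_cast h
  · exact Nat.cast_nonneg _
  · exact Nat.cast_nonneg _
  · exact_mod_cast f2
  · exact_mod_cast f3
  · exact_mod_cast f4.trans_le f5
  · exact_mod_cast f6

/-- **Lemma 3.1 (Das).** For a graph `G` of order `n ≥ 2`,
`q(G) ≤ 2e(G)/(n-1) + n - 2`. -/
theorem das_signless_laplacian_bound {V : Type*} [Fintype V] [DecidableEq V]
    (G : SimpleGraph V) [DecidableRel G.Adj] (n : ℕ) (hn : Fintype.card V = n)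
    (hn2 : 2 ≤ n) :
    qSpec G ≤ 2 * (eCard G : ℝ) / ((n : ℝ) - 1) + (n : ℝ) - 2 := by
  classical
  have hn1 : (0:ℝ) < (n:ℝ) - 1 := by
    have h2 : (2:ℝ) ≤ (n:ℝ) := by exact_mod_cast hn2
    linarith
  have hE : (eCard G : ℝ) = (G.edgeFinset.card : ℝ) := by
    norm_cast
    simp [eCard, Nat.card_coe_set_eq, Set.ncard_eq_toFinset_card', edgeFinset]
  set B : ℝ := 2 * (eCard G : ℝ) / ((n : ℝ) - 1) + (n : ℝ) - 2 with hBdef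
  have hB2 : B = 2 * (G.edgeFinset.card : ℝ) / ((n : ℝ) - 1) + ((n:ℝ) - 2) := by
    rw [hBdef, hE]; ring
  have hB0 : 0 ≤ B := by
    rw [hB2]
    have h1 : 0 ≤ 2 * (G.edgeFinset.card : ℝ) / ((n : ℝ) - 1) := by positivity
    have h2 : (2:ℝ) ≤ (n:ℝ) := by exact_mod_cast hn2
    linarith
  unfold qSpec
  apply Real.sSup_le _ hB0
  rintro μ hμ
  simp only [Set.mem_setOf_eq] at hμ
  obtain ⟨x, hx⟩ := hμ.exists_hasEigenvector
  have hMx : (Matrix.diagonal (fun v => (G.degree v : ℝ)) + G.adjMatrix ℝ).mulVec x = μ • x := by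
    rw [← Matrix.toLin'_apply]; exact hx.apply_eq_smul
  set z : V → ℝ := fun w => max (G.degree w : ℝ) 1 with hzdef
  have hz : ∀ i, 0 < z i := fun i => lt_of_lt_of_le one_pos (le_max_right _ _)
  refine cw_bound _ ?_ z hz ?_ hx.2 hMx
  · intro i j
    simp only [Matrix.add_apply]
    refine add_nonneg ?_ ?_
    · by_cases h : i = j
      · subst h; rw [Matrix.diagonal_apply_eq]; positivity
      · rw [Matrix.diagonal_apply_ne _ h]
    · rw [SimpleGraph.adjMatrix_apply]
      split_ifs <;> norm_num
  · intro u
    rw [Matrix.add_mulVec]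
    simp only [Pi.add_apply]
    rw [Matrix.mulVec_diagonal]
    rw [SimpleGraph.adjMatrix_mulVec_apply]
    by_cases hdeg : G.degree u = 0
    · have hNe : G.neighborFinset u = ∅ := Finset.card_eq_zero.mp hdeg
      rw [hNe, Finset.sum_empty, hdeg]
      simpa using mul_nonneg hB0 (hz u).le
    · have hd1 : 1 ≤ G.degree u := Nat.one_le_iff_ne_zero.mpr hdeg
      have hzd : ∀ w, 1 ≤ G.degree w → z w = (G.degree w : ℝ) := fun w hw =>
        max_eq_left (by exact_mod_cast hw)
      have hzu : z u = (G.degree u : ℝ) := hzd u hd1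
      have hsum : ∑ w ∈ G.neighborFinset u, z w
          = ((∑ w ∈ G.neighborFinset u, G.degree w : ℕ) : ℝ) := by
        push_cast
        refine Finset.sum_congr rfl fun w hw => ?_
        refine hzd w ?_
        have hadj : G.Adj w u := ((G.mem_neighborFinset u w).mp hw).symm
        exact (G.degree_pos_iff_exists_adj w).mpr ⟨u, hadj⟩
      rw [hzu, hsum]
      have hkey := das_key G n hn u hd1
      rw [hB2]
      have expand : (2 * (G.edgeFinset.card:ℝ) / ((n:ℝ)-1) + ((n:ℝ)-2)) * (G.degree u : ℝ)
          = ((2 * (G.edgeFinset.card:ℝ) + ((n:ℝ)-2) * ((n:ℝ)-1)) * (G.degree u:ℝ)) / ((n:ℝ)-1) := by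
        field_simp
      rw [expand, le_div_iff₀ hn1]
      calc (↑(G.degree u) * ↑(G.degree u) + ((∑ w ∈ G.neighborFinset u, G.degree w : ℕ) : ℝ))
            * ((n:ℝ)-1)
          = ((n:ℝ)-1) * ((G.degree u:ℝ)^2 + ((∑ w ∈ G.neighborFinset u, G.degree w : ℕ) : ℝ)) := by
            ring
        _ ≤ _ := hkey
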